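/- Contrapositive form: if I(S;S̃) ≤ ρ²/(2e²) where ρ = min_s p_S(s) > 0, then Σ_{s̃ ∈ S̃} min_{s ∈ S} p_{S̃|S}(s̃|s) ≥ 1 - e⁻¹. -/

import Mathlib

open Real Finset

private noncomputable def Gfun (x : ℝ) : ℝ := (x + 1) * Real.log x - 2 * (x - 1)
private noncomputable def Ffun (x : ℝ) : ℝ :=
  2 * (x + 2) * (x * Real.log x - x + 1) - 3 * (x - 1) ^ 2

private lemma hasDerivAt_G {x : ℝ} (hx : 0 < x) :
    HasDerivAt Gfun (Real.log x + x⁻¹ - 1) x := by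
  have h1 : HasDerivAt (fun x : ℝ => (x + 1) * Real.log x)
      (1 * Real.log x + (x + 1) * x⁻¹) x :=
    ((hasDerivAt_id x).add_const 1).mul (Real.hasDerivAt_log hx.ne')
  have h2 : HasDerivAt (fun x : ℝ => 2 * (x - 1)) (2 * 1) x :=
    ((hasDerivAt_id x).sub_const 1).const_mul 2
  refine (h1.sub h2).congr_deriv ?_
  rw [add_mul, mul_inv_cancel₀ hx.ne']; ring

private lemma G_mono : MonotoneOn Gfun (Set.Ioi 0) := by
  apply monotoneOn_of_deriv_nonneg (convex_Ioi 0)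
  · exact fun x hx => (hasDerivAt_G hx).continuousAt.continuousWithinAt
  · rw [interior_Ioi]
    exact fun x hx => (hasDerivAt_G hx).differentiableAt.differentiableWithinAt
  · intro x hx
    rw [interior_Ioi] at hx
    rw [(hasDerivAt_G hx).deriv]
    have := Real.one_sub_inv_le_log_of_pos hx
    linarith

private lemma hasDerivAt_F {x : ℝ} (hx : 0 < x) :
    HasDerivAt Ffun (4 * Gfun x) x := by
  have h1 : HasDerivAt (fun x : ℝ => x * Real.log x - x + 1) (Real.log x + 1 - 1) x :=
    ((Real.hasDerivAt_mul_log hx.ne').sub (hasDerivAt_id x)).add_const 1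
  have h2 : HasDerivAt (fun x : ℝ => 2 * (x + 2)) (2 * 1) x :=
    ((hasDerivAt_id x).add_const 2).const_mul 2
  have h4 : HasDerivAt (fun x : ℝ => 3 * (x - 1) ^ 2)
      (3 * (2 * (x - 1) ^ 1 * 1)) x :=
    (((hasDerivAt_id x).sub_const 1).pow 2).const_mul 3
  refine ((h2.mul h1).sub h4).congr_deriv ?_
  unfold Gfun; ring

private lemma F_cont : Continuous Ffun := by
  have := Real.continuous_mul_log
  unfold Ffun
  fun_prop

private lemma G_one : Gfun 1 = 0 := by simp [Gfun]

private lemma F_nonneg {x : ℝ} (hx : 0 ≤ x) : 0 ≤ Ffun x := by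
  have F1 : Ffun 1 = 0 := by simp [Ffun]
  rcases le_total x 1 with h | h
  · -- antitone on Icc 0 1
    have hanti : AntitoneOn Ffun (Set.Icc 0 1) := by
      apply antitoneOn_of_deriv_nonpos (convex_Icc 0 1) F_cont.continuousOn
      · rw [interior_Icc]
        exact fun y hy => (hasDerivAt_F hy.1).differentiableAt.differentiableWithinAt
      · intro y hy
        rw [interior_Icc] at hy
        rw [(hasDerivAt_F hy.1).deriv]
        have : Gfun y ≤ Gfun 1 := G_mono hy.1 (by norm_num) hy.2.le
        rw [G_one] at this
        linarith
    have := hanti ⟨hx, h⟩ ⟨zero_le_one, le_rfl⟩ h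
    rwa [F1] at this
  · have hmono : MonotoneOn Ffun (Set.Ici 1) := by
      apply monotoneOn_of_deriv_nonneg (convex_Ici 1) F_cont.continuousOn
      · rw [interior_Ici]
        exact fun y hy => (hasDerivAt_F (lt_trans one_pos hy)).differentiableAt.differentiableWithinAt
      · intro y hy
        rw [interior_Ici] at hy
        rw [(hasDerivAt_F (lt_trans one_pos hy)).deriv]
        have : Gfun 1 ≤ Gfun y := G_mono (by norm_num) (Set.mem_Ioi.2 (lt_trans one_pos hy)) hy.le
        rw [G_one] at this
        linarith
    have := hmono (Set.mem_Ici.2 le_rfl) h h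
    rwa [F1] at this

private lemma key_ineq {x : ℝ} (hx : 0 ≤ x) :
    3 * (x - 1) ^ 2 / (2 * (x + 2)) ≤ x * Real.log x - x + 1 := by
  have hd : (0:ℝ) < 2 * (x + 2) := by linarith
  rw [div_le_iff₀ hd]
  have := F_nonneg hx
  unfold Ffun at this
  nlinarith [this]

/-- per-term bound -/
private lemma term_bound {p q : ℝ} (hp : 0 ≤ p) (hq : 0 ≤ q) (hac : q = 0 → p = 0) :
    3 * (p - q) ^ 2 / (2 * (p + 2 * q)) ≤ p * Real.log (p / q) - p + q := by
  rcases eq_or_lt_of_le hq with h0 | hqpos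
  · have hp0 : p = 0 := hac h0.symm
    simp [hp0, ← h0]
  · have hx : 0 ≤ p / q := div_nonneg hp hqpos.le
    have := mul_le_mul_of_nonneg_left (key_ineq hx) hqpos.le
    have hL : q * (3 * (p / q - 1) ^ 2 / (2 * (p / q + 2))) =
        3 * (p - q) ^ 2 / (2 * (p + 2 * q)) := by
      rw [div_add' _ _ _ hqpos.ne', div_sub' hqpos.ne']
      rw [div_pow, ← mul_div_assoc]
      field_simp <;> ring
    have hR : q * (p / q * Real.log (p / q) - p / q + 1) =
        p * Real.log (p / q) - p + q := by
      field_simp <;> ring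
    rw [hL, hR] at this
    exact this

private lemma pinsker {α : Type*} [Fintype α] (P Q : α → ℝ)
    (hP : ∀ a, 0 ≤ P a) (hQ : ∀ a, 0 ≤ Q a)
    (hPs : ∑ a, P a = 1) (hQs : ∑ a, Q a = 1)
    (hac : ∀ a, Q a = 0 → P a = 0) :
    (∑ a, |P a - Q a|) ^ 2 ≤ 2 * ∑ a, P a * Real.log (P a / Q a) := by
  have hCS : (∑ a, |P a - Q a|) ^ 2 ≤
      (∑ a, 3 * (P a - Q a) ^ 2 / (2 * (P a + 2 * Q a))) *
        ∑ a, 2 * (P a + 2 * Q a) / 3 := by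
    apply sum_sq_le_sum_mul_sum_of_sq_eq_mul
    · intro a _
      exact div_nonneg (by positivity) (by have := hP a; have := hQ a; linarith)
    · intro a _
      have := hP a; have := hQ a; linarith
    · intro a _
      rcases eq_or_lt_of_le (by have := hP a; have := hQ a; positivity :
          (0:ℝ) ≤ P a + 2 * Q a) with h0 | hpos
      · have hq0 : Q a = 0 := by nlinarith [hP a, hQ a]
        have hp0 : P a = 0 := hac a hq0
        simp [hp0, hq0]
      · rw [sq_abs]
        have := hpos.ne'
        rw [div_mul_div_comm, eq_div_iff (mul_ne_zero (mul_ne_zero two_ne_zero this) three_ne_zero)]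
        ring
  have hg : ∑ a, 2 * (P a + 2 * Q a) / 3 = 2 := by
    rw [← sum_div, ← mul_sum, sum_add_distrib, hPs, ← mul_sum, hQs]
    norm_num
  have hf : (∑ a, 3 * (P a - Q a) ^ 2 / (2 * (P a + 2 * Q a))) ≤
      ∑ a, P a * Real.log (P a / Q a) := by
    have h1 : (∑ a, 3 * (P a - Q a) ^ 2 / (2 * (P a + 2 * Q a))) ≤
        ∑ a, (P a * Real.log (P a / Q a) - P a + Q a) :=
      sum_le_sum fun a _ => term_bound (hP a) (hQ a) (hac a)
    have h2 : ∑ a, (P a * Real.log (P a / Q a) - P a + Q a) =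
        ∑ a, P a * Real.log (P a / Q a) := by
      rw [sum_add_distrib, sum_sub_distrib, hPs, hQs]
      ring
    linarith
  calc (∑ a, |P a - Q a|) ^ 2 ≤ _ := hCS
    _ ≤ (∑ a, P a * Real.log (P a / Q a)) * 2 := by
        rw [hg]
        apply mul_le_mul_of_nonneg_right hf (by norm_num)
    _ = _ := by ring

/-- Contrapositive: if the mutual information `I(S; S̃)` (in nats) is at most
`ρ²/(2e²)` with `ρ = min_s p_S(s) > 0`, then `∑_t min_s W(t|s) ≥ 1 - e⁻¹`. -/
theorem min_sum_ge_of_mutualInfo_le {S T : Type*} [Fintype S] [Fintype T]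
    [Nonempty S]
    (pS : S → ℝ) (hpSnn : ∀ s, 0 < pS s) (hpSsum : ∑ s, pS s = 1)
    (W : S → T → ℝ) (hWnn : ∀ s t, 0 ≤ W s t) (hWsum : ∀ s, ∑ t, W s t = 1)
    (hI : ∑ s, ∑ t, pS s * W s t *
        Real.log (W s t / (∑ s', pS s' * W s' t))
        ≤ ((Finset.univ.inf' Finset.univ_nonempty pS) ^ 2) / (2 * Real.exp 1 ^ 2)) :
    1 - (Real.exp 1)⁻¹ ≤
      ∑ t, Finset.univ.inf' Finset.univ_nonempty (fun s => W s t) := by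
  classical
  set ρ := Finset.univ.inf' Finset.univ_nonempty pS with hρ
  have hρpos : 0 < ρ := by
    rw [hρ, Finset.lt_inf'_iff]
    exact fun s _ => hpSnn s
  have hρle : ∀ s, ρ ≤ pS s := fun s => Finset.inf'_le _ (Finset.mem_univ s)
  set q : T → ℝ := fun t => ∑ s', pS s' * W s' t with hqdef
  have hqnn : ∀ t, 0 ≤ q t := fun t =>
    Finset.sum_nonneg fun s _ => mul_nonneg (hpSnn s).le (hWnn s t)
  have hqsum : ∑ t, q t = 1 := by
    simp only [hqdef]
    rw [Finset.sum_comm]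
    simp_rw [← Finset.mul_sum, hWsum, mul_one]
    exact hpSsum
  have hW0 : ∀ s t, q t = 0 → W s t = 0 := by
    intro s t h
    have hle : pS s * W s t ≤ q t :=
      Finset.single_le_sum (fun s' _ => mul_nonneg (hpSnn s').le (hWnn s' t))
        (Finset.mem_univ s)
    have hnn : 0 ≤ pS s * W s t := mul_nonneg (hpSnn s).le (hWnn s t)
    have : pS s * W s t = 0 := le_antisymm (h ▸ hle) hnn
    rcases mul_eq_zero.1 this with h' | h'
    · exact absurd h' (hpSnn s).ne'
    · exact h'
  -- Pinsker on the joint space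
  have hpink := pinsker (α := S × T) (fun p => pS p.1 * W p.1 p.2)
      (fun p => pS p.1 * q p.2)
      (fun p => mul_nonneg (hpSnn p.1).le (hWnn p.1 p.2))
      (fun p => mul_nonneg (hpSnn p.1).le (hqnn p.2))
      (by rw [Fintype.sum_prod_type]
          simp_rw [← Finset.mul_sum, hWsum, mul_one]
          exact hpSsum)
      (by rw [Fintype.sum_prod_type]
          simp_rw [← Finset.mul_sum, hqsum, mul_one]
          exact hpSsum)
      (by rintro ⟨s, t⟩ h
          simp only at h ⊢
          rcases mul_eq_zero.1 h with h' | h'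
          · exact absurd h' (hpSnn s).ne'
          · rw [hW0 s t h', mul_zero])
  have hD : ∑ p : S × T, pS p.1 * W p.1 p.2 *
      Real.log ((pS p.1 * W p.1 p.2) / (pS p.1 * q p.2)) =
      ∑ s, ∑ t, pS s * W s t * Real.log (W s t / q t) := by
    rw [Fintype.sum_prod_type]
    congr 1; ext s; congr 1; ext t
    rw [mul_div_mul_left _ _ (hpSnn s).ne']
  have hAeq : ∑ p : S × T, |pS p.1 * W p.1 p.2 - pS p.1 * q p.2| =
      ∑ t, ∑ s, pS s * |W s t - q t| := by
    rw [Fintype.sum_prod_type, Finset.sum_comm]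
    congr 1; ext t; congr 1; ext s
    rw [← mul_sub, abs_mul, abs_of_nonneg (hpSnn s).le]
  set A := ∑ t, ∑ s, pS s * |W s t - q t| with hAdef
  have hAnn : 0 ≤ A :=
    Finset.sum_nonneg fun t _ => Finset.sum_nonneg fun s _ =>
      mul_nonneg (hpSnn s).le (abs_nonneg _)
  have hA2 : A ^ 2 ≤ (ρ / Real.exp 1) ^ 2 := by
    rw [← hAeq]
    refine le_trans hpink ?_
    rw [hD]
    have := hI
    rw [div_pow]
    have hE : (0:ℝ) < Real.exp 1 := Real.exp_pos 1
    calc 2 * ∑ s, ∑ t, pS s * W s t * Real.log (W s t / q t)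
        ≤ 2 * (ρ ^ 2 / (2 * Real.exp 1 ^ 2)) := by linarith
      _ = ρ ^ 2 / Real.exp 1 ^ 2 := by field_simp
  have hEpos : (0:ℝ) < Real.exp 1 := Real.exp_pos 1
  have hA : A ≤ ρ / Real.exp 1 := by
    nlinarith [div_pos hρpos hEpos]
  have hper : ∀ t, q t - (1 / ρ) * ∑ s, pS s * |W s t - q t| ≤
      Finset.univ.inf' Finset.univ_nonempty (fun s => W s t) := by
    intro t
    obtain ⟨s₀, -, hs₀⟩ := Finset.exists_mem_eq_inf' Finset.univ_nonempty
      (fun s => W s t)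
    rw [hs₀]
    have h1 : q t - W s₀ t ≤ |W s₀ t - q t| := by
      rw [abs_sub_comm]; exact le_abs_self _
    have h2 : ρ * |W s₀ t - q t| ≤ pS s₀ * |W s₀ t - q t| :=
      mul_le_mul_of_nonneg_right (hρle s₀) (abs_nonneg _)
    have h3 : pS s₀ * |W s₀ t - q t| ≤ ∑ s, pS s * |W s t - q t| :=
      Finset.single_le_sum (f := fun s => pS s * |W s t - q t|)
        (fun s _ => mul_nonneg (hpSnn s).le (abs_nonneg _)) (Finset.mem_univ s₀)
    have h4 : |W s₀ t - q t| ≤ (1 / ρ) * ∑ s, pS s * |W s t - q t| := by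
      rw [one_div, ← div_eq_inv_mul, le_div_iff₀ hρpos]
      calc |W s₀ t - q t| * ρ = ρ * |W s₀ t - q t| := by ring
        _ ≤ _ := le_trans h2 h3
    linarith
  have hsum := Finset.sum_le_sum fun t (_ : t ∈ Finset.univ) => hper t
  rw [Finset.sum_sub_distrib, hqsum, ← Finset.mul_sum, ← hAdef] at hsum
  have hfin : (1 / ρ) * A ≤ (Real.exp 1)⁻¹ := by
    calc (1 / ρ) * A ≤ (1 / ρ) * (ρ / Real.exp 1) := by
          apply mul_le_mul_of_nonneg_left hA
          positivity
      _ = (Real.exp 1)⁻¹ := by field_simp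
  linarith
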